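/- Let ν be a (c,L)-log-concave density on ℝ^d with mode m (i.e., ∇(−log ν)(m) = 0). Then V(x) = (c/d)‖x−m‖² + 1 is a (λ, h, B, C)-Lyapunov function for ν with λ = c, h = 3c, B = B(m, √(3d/c)), and C = exp(3dL/(2c)). Consequently, ν is an Ly(r, q, a)-density with center m, where r = √(3d/c), q = c^{−1} + (9d/c)·exp(3dL/c), and a = (1/V_d)·exp(3Ld/(2c))·(4π/(3d))^{d/2}, V_d being the volume of the d-dimensional unit ball. -/

import Mathlib

open MeasureTheory RealInnerProductSpace

noncomputable section

abbrev Euc (d : ℕ) := EuclideanSpace ℝ (Fin d)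

def IsDensity {d : ℕ} (ρ : Euc d → ℝ) : Prop :=
  (∀ x, 0 ≤ ρ x) ∧ ∫ x, ρ x = 1

def lap {d : ℕ} (f : Euc d → ℝ) (x : Euc d) : ℝ :=
  ∑ i : Fin d, fderiv ℝ (fun y => fderiv ℝ f y (EuclideanSpace.single i 1)) x (EuclideanSpace.single i 1)

def LGen {d : ℕ} (ν V : Euc d → ℝ) (x : Euc d) : ℝ :=
  ⟪gradient V x, gradient (fun y => Real.log (ν y)) x⟫ + lap V x

structure IsLyapunov {d : ℕ} (ν V : Euc d → ℝ) (lam h : ℝ) (B : Set (Euc d)) (C : ℝ) : Prop where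
  contDiff : ContDiff ℝ 2 V
  one_le : ∀ x, 1 ≤ V x
  lam_pos : 0 < lam
  h_pos : 0 < h
  C_pos : 0 < C
  bounded : Bornology.IsBounded B
  drift : ∀ x, LGen ν V x ≤ -lam * V x + h * B.indicator 1 x
  ratio : ∀ x ∈ B, ∀ y ∈ B, ν x ≤ C * ν y

def uball {d : ℕ} (x₀ : Euc d) (R : ℝ) (x : Euc d) : ℝ :=
  (Metric.closedBall x₀ R).indicator (fun _ => ((volume (Metric.closedBall x₀ R)).toReal)⁻¹) x

def IsLyDensity {d : ℕ} (ν : Euc d → ℝ) (x₀ : Euc d) (R q a : ℝ) : Prop :=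
  ∃ V lam h C, IsLyapunov ν V lam h (Metric.closedBall x₀ R) C ∧
    (1 + h * R ^ 2 * C ^ 2) / lam ≤ q ∧
    ∀ x ∈ Metric.closedBall x₀ R, uball x₀ R x ≤ a * ν x

def Vball (d : ℕ) : ℝ := (volume (Metric.closedBall (0 : Euc d) 1)).toReal

def IsLogConcave {d : ℕ} (ν : Euc d → ℝ) (c L : ℝ) : Prop :=
  ContDiff ℝ 2 (fun x => -Real.log (ν x)) ∧
  (∀ x y : Euc d, c * ‖x - y‖ ^ 2 ≤
      ⟪gradient (fun z => -Real.log (ν z)) x - gradient (fun z => -Real.log (ν z)) y, x - y⟫) ∧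
  (∀ x : Euc d, ‖fderiv ℝ (fun z => gradient (fun w => -Real.log (ν w)) z) x‖ ≤ L)

def GammaR {d : ℕ} (π πy : Euc d → ℝ) (τ ρ : ℝ) (f : Euc d × Euc d → ℝ) (x y : Euc d) : ℝ :=
  ‖gradient (fun x' => f (x', y)) x‖ ^ 2 + τ * ‖gradient (fun y' => f (x, y')) y‖ ^ 2 +
    (ρ / 2) * min 1 (π y * πy x / (π x * πy y)) * (f (y, x) - f (x, y)) ^ 2



section LyapunovHelpers

variable {d : ℕ}

private lemma inner_gradient_eq' (f : Euc d → ℝ) (x v : Euc d) :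
    ⟪gradient f x, v⟫ = fderiv ℝ f x v :=
  InnerProductSpace.toDual_symm_apply

private lemma gradient_neg' (f : Euc d → ℝ) (x : Euc d) :
    gradient (fun y => -(f y)) x = -gradient f x := by
  unfold gradient
  rw [fderiv_fun_neg, map_neg]

private lemma hasGradientAt_quad (cc : ℝ) (m x : Euc d) :
    HasGradientAt (fun x : Euc d => cc * ‖x - m‖ ^ 2 + 1) ((2 * cc) • (x - m)) x := by
  have h1 : HasFDerivAt (fun x : Euc d => x - m) (ContinuousLinearMap.id ℝ (Euc d)) x :=
    (hasFDerivAt_id x).sub_const m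
  have h2 := ((h1.inner ℝ h1).const_mul cc).add_const 1
  have heq : (fun x : Euc d => cc * ⟪x - m, x - m⟫ + 1)
      = fun x : Euc d => cc * ‖x - m‖ ^ 2 + 1 := by
    funext y; rw [real_inner_self_eq_norm_sq]
  rw [heq] at h2
  have hlin : (cc • ((fderivInnerCLM ℝ ((x - m : Euc d), (x - m : Euc d))).comp
      (((ContinuousLinearMap.id ℝ (Euc d))).prod ((ContinuousLinearMap.id ℝ (Euc d))))))
      = InnerProductSpace.toDual ℝ (Euc d) ((2 * cc) • (x - m)) := by
    ext v
    simp only [ContinuousLinearMap.smul_apply, ContinuousLinearMap.coe_comp',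
      Function.comp_apply, ContinuousLinearMap.prod_apply, ContinuousLinearMap.coe_id', id_eq,
      fderivInnerCLM_apply, InnerProductSpace.toDual_apply_apply, smul_eq_mul, real_inner_smul_left]
    rw [real_inner_comm v (x - m)]
    ring
  rw [hlin] at h2
  have h3 := h2.hasGradientAt
  rwa [LinearIsometryEquiv.symm_apply_apply] at h3

private lemma gradient_quad (cc : ℝ) (m x : Euc d) :
    gradient (fun x : Euc d => cc * ‖x - m‖ ^ 2 + 1) x = (2 * cc) • (x - m) :=
  (hasGradientAt_quad cc m x).gradient

private lemma fderiv_quad' (cc : ℝ) (m x v : Euc d) :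
    fderiv ℝ (fun x : Euc d => cc * ‖x - m‖ ^ 2 + 1) x v = (2 * cc) * ⟪x - m, v⟫ := by
  rw [(hasGradientAt_quad cc m x).hasFDerivAt.fderiv, InnerProductSpace.toDual_apply_apply,
    real_inner_smul_left]

private lemma lap_quad (cc : ℝ) (m x : Euc d) :
    lap (fun x : Euc d => cc * ‖x - m‖ ^ 2 + 1) x = d * (2 * cc) := by
  unfold lap
  have key : ∀ i : Fin d,
      fderiv ℝ (fun y => fderiv ℝ (fun x : Euc d => cc * ‖x - m‖ ^ 2 + 1) y
        (EuclideanSpace.single i 1)) x (EuclideanSpace.single i 1) = 2 * cc := by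
    intro i
    set e : Euc d := EuclideanSpace.single i (1:ℝ) with he
    have hfe : (fun y : Euc d => fderiv ℝ (fun x : Euc d => cc * ‖x - m‖ ^ 2 + 1) y e)
        = fun y : Euc d => (2 * cc) * ⟪e, y - m⟫ := by
      funext y; rw [fderiv_quad', real_inner_comm]
    rw [hfe]
    have ha : HasFDerivAt (fun y : Euc d => y - m) (ContinuousLinearMap.id ℝ (Euc d)) x :=
      (hasFDerivAt_id x).sub_const m
    have h0 := ((innerSL ℝ e).hasFDerivAt).comp x ha
    have h0' : HasFDerivAt (fun y : Euc d => ⟪e, y - m⟫) (innerSL ℝ e) x := by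
      exact h0
    have h1 := h0'.const_mul (2 * cc)
    rw [h1.fderiv]
    have h2 : ⟪e, e⟫ = 1 := by
      rw [real_inner_self_eq_norm_sq, he, EuclideanSpace.norm_single]
      norm_num
    rw [ContinuousLinearMap.smul_apply, innerSL_apply_apply, h2, smul_eq_mul, mul_one]
  rw [Finset.sum_congr rfl (fun i _ => key i)]
  simp [mul_comm]

private lemma hasDerivAt_seg' {f : Euc d → ℝ} (hf : Differentiable ℝ f) (m v : Euc d) (t : ℝ) :
    HasDerivAt (fun s : ℝ => f (m + s • v)) ⟪gradient f (m + t • v), v⟫ t := by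
  have h1 : HasDerivAt (fun s : ℝ => m + s • v) v t := by
    simpa using ((hasDerivAt_id t).smul_const v).const_add m
  have h2 := (hf (m + t • v)).hasFDerivAt.comp_hasDerivAt t h1
  rw [inner_gradient_eq']
  exact h2

private lemma quad_bounds {H : Euc d → ℝ} (hH : Differentiable ℝ H)
    {c L : ℝ} (hc : 0 < c) (hL : 0 ≤ L) (m : Euc d) (hm : gradient H m = 0)
    (hmono : ∀ x z : Euc d, c * ‖x - z‖ ^ 2 ≤ ⟪gradient H x - gradient H z, x - z⟫)
    (hlip : ∀ x : Euc d, ‖gradient H x‖ ≤ L * ‖x - m‖) (y : Euc d) :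
    H m + (c / 2) * ‖y - m‖ ^ 2 ≤ H y ∧ H y ≤ H m + (L / 2) * ‖y - m‖ ^ 2 := by
  set v : Euc d := y - m with hv
  have hy1 : m + (1 : ℝ) • v = y := by rw [one_smul, hv]; abel
  have hy0 : m + (0 : ℝ) • v = m := by rw [zero_smul, add_zero]
  set g' : ℝ → ℝ := fun t => ⟪gradient H (m + t • v), v⟫ with hg'
  have hg : ∀ t : ℝ, HasDerivAt (fun s : ℝ => H (m + s • v)) (g' t) t :=
    fun t => hasDerivAt_seg' hH m v t
  have hlow : ∀ t : ℝ, 0 < t → c * t * ‖v‖ ^ 2 ≤ g' t := by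
    intro t ht
    have h1 := hmono (m + t • v) m
    rw [hm, sub_zero, add_sub_cancel_left] at h1
    rw [real_inner_smul_right, norm_smul] at h1
    have h2 : c * (t * ‖v‖) ^ 2 ≤ t * g' t := by
      calc c * (t * ‖v‖) ^ 2 = c * (‖t‖ * ‖v‖) ^ 2 := by
            rw [Real.norm_eq_abs, abs_of_pos ht]
        _ ≤ t * g' t := h1
    nlinarith [h2, ht]
  have hupp : ∀ t : ℝ, 0 < t → g' t ≤ L * t * ‖v‖ ^ 2 := by
    intro t ht
    have h1 : g' t ≤ ‖gradient H (m + t • v)‖ * ‖v‖ := real_inner_le_norm _ _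
    have h2 : ‖gradient H (m + t • v)‖ ≤ L * (t * ‖v‖) := by
      have h3 := hlip (m + t • v)
      rwa [add_sub_cancel_left, norm_smul, Real.norm_eq_abs, abs_of_pos ht] at h3
    have h3 : ‖gradient H (m + t • v)‖ * ‖v‖ ≤ L * (t * ‖v‖) * ‖v‖ :=
      mul_le_mul_of_nonneg_right h2 (norm_nonneg v)
    nlinarith [h1, h3]
  constructor
  · set φ : ℝ → ℝ := fun t => H (m + t • v) - c / 2 * ‖v‖ ^ 2 * t ^ 2 with hφdef
    have hφ : ∀ t : ℝ, HasDerivAt φ (g' t - c / 2 * ‖v‖ ^ 2 * (2 * t)) t := by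
      intro t
      have h2 : HasDerivAt (fun t : ℝ => c / 2 * ‖v‖ ^ 2 * t ^ 2)
          (c / 2 * ‖v‖ ^ 2 * (2 * t)) t := by
        simpa [mul_comm] using (hasDerivAt_pow 2 t).const_mul (c / 2 * ‖v‖ ^ 2)
      exact (hg t).sub h2
    have hmonoφ : MonotoneOn φ (Set.Icc (0:ℝ) 1) := by
      apply monotoneOn_of_hasDerivWithinAt_nonneg (convex_Icc 0 1)
        (fun t _ => (hφ t).continuousAt.continuousWithinAt)
        (fun t _ => (hφ t).hasDerivWithinAt)
      intro t ht
      rw [interior_Icc] at ht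
      have := hlow t ht.1
      nlinarith [this]
    have := hmonoφ (Set.mem_Icc.2 ⟨le_refl 0, zero_le_one⟩)
      (Set.mem_Icc.2 ⟨zero_le_one, le_refl 1⟩) zero_le_one
    simp only [hφdef, hy0, hy1] at this
    nlinarith [this]
  · set ψ : ℝ → ℝ := fun t => L / 2 * ‖v‖ ^ 2 * t ^ 2 - H (m + t • v) with hψdef
    have hψ : ∀ t : ℝ, HasDerivAt ψ (L / 2 * ‖v‖ ^ 2 * (2 * t) - g' t) t := by
      intro t
      have h2 : HasDerivAt (fun t : ℝ => L / 2 * ‖v‖ ^ 2 * t ^ 2)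
          (L / 2 * ‖v‖ ^ 2 * (2 * t)) t := by
        simpa [mul_comm] using (hasDerivAt_pow 2 t).const_mul (L / 2 * ‖v‖ ^ 2)
      exact h2.sub (hg t)
    have hmonoψ : MonotoneOn ψ (Set.Icc (0:ℝ) 1) := by
      apply monotoneOn_of_hasDerivWithinAt_nonneg (convex_Icc 0 1)
        (fun t _ => (hψ t).continuousAt.continuousWithinAt)
        (fun t _ => (hψ t).hasDerivWithinAt)
      intro t ht
      rw [interior_Icc] at ht
      have := hupp t ht.1
      nlinarith [this]
    have := hmonoψ (Set.mem_Icc.2 ⟨le_refl 0, zero_le_one⟩)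
      (Set.mem_Icc.2 ⟨zero_le_one, le_refl 1⟩) zero_le_one
    simp only [hψdef, hy0, hy1] at this
    nlinarith [this]

end LyapunovHelpers

set_option maxHeartbeats 1000000 in
/-- a `(c,L)`-log-concave density admits the quadratic Lyapunov function
`V(x) = (c/d)‖x−m‖² + 1`, and is consequently an `Ly(r,q,a)`-density with explicit
constants. -/
theorem logconcave_lyapunov
    (d : ℕ) (hd : 1 ≤ d) (c L : ℝ) (hc : 0 < c) (hL : 0 < L)
    (ν : Euc d → ℝ) (hν : IsDensity ν) (hνpos : ∀ x, 0 < ν x)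
    (hlc : IsLogConcave ν c L)
    (m : Euc d) (hm : gradient (fun z => -Real.log (ν z)) m = 0) :
    IsLyapunov ν (fun x => (c / d) * ‖x - m‖ ^ 2 + 1) c (3 * c)
        (Metric.closedBall m (Real.sqrt (3 * d / c))) (Real.exp (3 * d * L / (2 * c))) ∧
    IsLyDensity ν m (Real.sqrt (3 * d / c))
        (c⁻¹ + (9 * d / c) * Real.exp (3 * d * L / c))
        ((Vball d)⁻¹ * Real.exp (3 * L * d / (2 * c)) * (4 * Real.pi / (3 * d)) ^ ((d : ℝ) / 2)) := by
  obtain ⟨hH2, hmono, hfb⟩ := hlc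
  set H : Euc d → ℝ := fun x => -Real.log (ν x) with hHdef
  clear_value H
  have hd0 : (0:ℝ) < d := by exact_mod_cast hd
  have hdne : (d:ℝ) ≠ 0 := ne_of_gt hd0
  have hR0 : (0:ℝ) ≤ 3 * d / c := by positivity
  set R : ℝ := Real.sqrt (3 * d / c) with hRdef
  have hRsq : R ^ 2 = 3 * d / c := by rw [hRdef]; exact Real.sq_sqrt hR0
  have hRnn : 0 ≤ R := by rw [hRdef]; exact Real.sqrt_nonneg _
  clear_value R
  have hπ := Real.pi_pos
  have hHdiff : Differentiable ℝ H := hH2.differentiable (by norm_num)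
  have hgdiff : Differentiable ℝ (fun z : Euc d => gradient H z) := by
    have h1 : ContDiff ℝ 1 (fderiv ℝ H) := hH2.fderiv_right (by norm_num)
    exact ((InnerProductSpace.toDual ℝ (Euc d)).symm.contDiff.differentiable (n := 1) one_ne_zero).comp
      (h1.differentiable (by norm_num))
  have hlip : ∀ x : Euc d, ‖gradient H x‖ ≤ L * ‖x - m‖ := by
    intro x
    have h1 := convex_univ.norm_image_sub_le_of_norm_fderiv_le (s := Set.univ)
      (f := fun z : Euc d => gradient H z)
      (fun z _ => hgdiff z) (fun z _ => hfb z)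
      (Set.mem_univ m) (Set.mem_univ x)
    rwa [hm, sub_zero] at h1
  have hqb := quad_bounds hHdiff hc hL.le m hm hmono hlip
  have hν_eq : ∀ x, ν x = Real.exp (-(H x)) := by
    intro x
    rw [hHdef]
    simp [Real.exp_log (hνpos x)]
  set cc : ℝ := c / d with hcc
  clear_value cc
  have hccpos : 0 < cc := by rw [hcc]; positivity
  have hgradlog : ∀ x : Euc d, gradient (fun y => Real.log (ν y)) x = -gradient H x := by
    intro x
    have h1 : (fun y => Real.log (ν y)) = fun y => -(H y) := by
      funext y; rw [hHdef]; simp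
    rw [h1, gradient_neg']
  have hLGen : ∀ x : Euc d, LGen ν (fun x => cc * ‖x - m‖ ^ 2 + 1) x
      = -((2 * cc) * ⟪gradient H x, x - m⟫) + 2 * c := by
    intro x
    unfold LGen
    rw [gradient_quad, hgradlog, lap_quad, real_inner_smul_left, inner_neg_right,
      real_inner_comm]
    have h1 : (d : ℝ) * (2 * cc) = 2 * c := by rw [hcc]; field_simp
    rw [h1]; ring
  have hmono' : ∀ x : Euc d, c * ‖x - m‖ ^ 2 ≤ ⟪gradient H x, x - m⟫ := by
    intro x
    have h1 := hmono x m
    rwa [hm, sub_zero] at h1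
  -- the Lyapunov structure
  have lyap : IsLyapunov ν (fun x => cc * ‖x - m‖ ^ 2 + 1) c (3 * c)
      (Metric.closedBall m R) (Real.exp (3 * d * L / (2 * c))) := by
    constructor
    · exact (contDiff_const.mul ((contDiff_id.sub contDiff_const).norm_sq (𝕜 := ℝ))).add
        contDiff_const
    · intro x; nlinarith [sq_nonneg ‖x - m‖, norm_nonneg (x - m), hccpos.le]
    · exact hc
    · positivity
    · positivity
    · exact Metric.isBounded_closedBall
    · intro x
      have h1 := hLGen x
      have h2 : (2 * cc) * (c * ‖x - m‖ ^ 2) ≤ (2 * cc) * ⟪gradient H x, x - m⟫ :=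
        mul_le_mul_of_nonneg_left (hmono' x) (by positivity)
      set s : ℝ := ‖x - m‖ ^ 2 with hs
      have hsnn : 0 ≤ s := sq_nonneg _
      by_cases hx : x ∈ Metric.closedBall m R
      · rw [Set.indicator_of_mem hx, Pi.one_apply, h1]
        nlinarith [h2, mul_nonneg (mul_nonneg hc.le hccpos.le) hsnn]
      · rw [Set.indicator_of_notMem hx, h1]
        have hdist : R < ‖x - m‖ := by
          rw [Metric.mem_closedBall, not_le, dist_eq_norm] at hx
          exact hx
        have hslb : 3 * d / c < s := by
          rw [← hRsq, hs]
          exact pow_lt_pow_left₀ hdist hRnn (by norm_num)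
        have h3 : 3 ≤ cc * s := by
          rw [hcc, div_mul_eq_mul_div, le_div_iff₀ hd0]
          rw [div_lt_iff₀ hc] at hslb
          nlinarith [hslb]
        nlinarith [h2, h3]
    · intro x hx y hy
      rw [hν_eq x, hν_eq y, ← Real.exp_add, Real.exp_le_exp]
      have hyb : ‖y - m‖ ^ 2 ≤ R ^ 2 := by
        rw [Metric.mem_closedBall, dist_eq_norm] at hy
        exact pow_le_pow_left₀ (norm_nonneg _) hy 2
      have h1 : H y ≤ H m + (L / 2) * (3 * d / c) := by
        have h4 := (hqb y).2
        have h2 : (L / 2) * ‖y - m‖ ^ 2 ≤ (L / 2) * (3 * d / c) := by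
          rw [← hRsq]; exact mul_le_mul_of_nonneg_left hyb (by positivity)
        linarith
      have h2 : H m ≤ H x := by
        have h5 := (hqb x).1
        have h6 : (0:ℝ) ≤ c / 2 * ‖x - m‖ ^ 2 := by positivity
        linarith [h5, h6]
      have h3 : (L / 2) * (3 * d / c) = 3 * d * L / (2 * c) := by
        field_simp
      linarith [h1, h2, h3.le, h3.ge]
  refine ⟨lyap, (fun x => cc * ‖x - m‖ ^ 2 + 1), c, 3 * c,
    Real.exp (3 * d * L / (2 * c)), ?_, ?_, ?_⟩
  · exact lyap
  · -- the q bound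
    have hC2 : Real.exp (3 * d * L / (2 * c)) ^ 2 = Real.exp (3 * d * L / c) := by
      rw [sq, ← Real.exp_add]
      congr 1
      field_simp
      ring
    apply le_of_eq
    rw [hRsq, hC2]
    field_simp
    ring
  · -- the uball bound
    set A : ℝ := (Real.pi / (c / 2)) ^ ((d : ℝ) / 2) with hA
    have hApos : 0 < A := by rw [hA]; positivity
    have hgauss : ∫ y : Euc d, Real.exp (-(c / 2) * ‖y‖ ^ 2) = A := by
      have h := GaussianFourier.integral_rexp_neg_mul_sq_norm (V := Euc d)
        (b := c / 2) (by positivity)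
      rw [h, hA]
      norm_num [finrank_euclideanSpace_fin]
    have hInt0 : Integrable (fun v : Euc d => Real.exp (-(c / 2) * ‖v‖ ^ 2)) := by
      have h := GaussianFourier.integrable_cexp_neg_mul_sq_norm_add (V := Euc d)
        (b := ((c / 2 : ℝ) : ℂ)) (by simpa using half_pos hc) 0 (0 : Euc d)
      have h2 := h.norm
      refine h2.congr (Filter.Eventually.of_forall fun v => ?_)
      simp [Complex.norm_exp]
      left
      norm_cast
    have hIntg : Integrable (fun y : Euc d => Real.exp (-(c / 2) * ‖y - m‖ ^ 2)) :=
      hInt0.comp_sub_right m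
    have hbound : ∀ y : Euc d, ν y ≤ ν m * Real.exp (-(c / 2) * ‖y - m‖ ^ 2) := by
      intro y
      rw [hν_eq y, hν_eq m, ← Real.exp_add, Real.exp_le_exp]
      have := (hqb y).1
      linarith
    have hνcont : Continuous ν := by
      have h1 : ν = fun y => Real.exp (-(H y)) := funext hν_eq
      rw [h1]
      exact Real.continuous_exp.comp hH2.continuous.neg
    have hνInt : Integrable ν := by
      refine (hIntg.const_mul (ν m)).mono' hνcont.aestronglyMeasurable
        (Filter.Eventually.of_forall fun y => ?_)
      rw [Real.norm_eq_abs, abs_of_nonneg (hν.1 y)]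
      exact hbound y
    have h1le : 1 ≤ ν m * A := by
      calc (1:ℝ) = ∫ y, ν y := hν.2.symm
        _ ≤ ∫ y : Euc d, ν m * Real.exp (-(c / 2) * ‖y - m‖ ^ 2) :=
            integral_mono hνInt (hIntg.const_mul _) hbound
        _ = ν m * ∫ y : Euc d, Real.exp (-(c / 2) * ‖y - m‖ ^ 2) := integral_const_mul _ _
        _ = ν m * ∫ y : Euc d, Real.exp (-(c / 2) * ‖y‖ ^ 2) := by
            rw [integral_sub_right_eq_self (fun y : Euc d => Real.exp (-(c / 2) * ‖y‖ ^ 2)) m]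
        _ = ν m * A := by rw [hgauss]
    have hνm : A⁻¹ ≤ ν m := by
      rw [inv_le_iff_one_le_mul₀ hApos]
      linarith [h1le]
    have hνlb : ∀ x ∈ Metric.closedBall m R,
        A⁻¹ * Real.exp (-(3 * L * d / (2 * c))) ≤ ν x := by
      intro x hx
      rw [Metric.mem_closedBall, dist_eq_norm] at hx
      have hxb : ‖x - m‖ ^ 2 ≤ 3 * d / c := by
        rw [← hRsq]; exact pow_le_pow_left₀ (norm_nonneg _) hx 2
      have hHx : H x ≤ H m + 3 * L * d / (2 * c) := by
        have h2 := (hqb x).2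
        have h3 : (L / 2) * ‖x - m‖ ^ 2 ≤ 3 * L * d / (2 * c) := by
          calc (L / 2) * ‖x - m‖ ^ 2 ≤ (L / 2) * (3 * d / c) :=
              mul_le_mul_of_nonneg_left hxb (by positivity)
            _ = 3 * L * d / (2 * c) := by field_simp
        linarith
      have h4 : Real.exp (-(H m) - 3 * L * d / (2 * c)) ≤ ν x := by
        rw [hν_eq x, Real.exp_le_exp]
        linarith
      calc A⁻¹ * Real.exp (-(3 * L * d / (2 * c)))
          ≤ ν m * Real.exp (-(3 * L * d / (2 * c))) :=
            mul_le_mul_of_nonneg_right hνm (Real.exp_pos _).le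
        _ = Real.exp (-(H m) - 3 * L * d / (2 * c)) := by
            rw [hν_eq m, ← Real.exp_add]; ring_nf
        _ ≤ ν x := h4
    have hVb : 0 < Vball d := by
      rw [Vball]
      apply ENNReal.toReal_pos
      · exact (Metric.measure_closedBall_pos volume 0 one_pos).ne'
      · exact measure_closedBall_lt_top.ne
    have hvol : (volume (Metric.closedBall m R)).toReal = R ^ d * Vball d := by
      rw [Measure.addHaar_closedBall' volume m hRnn, ENNReal.toReal_mul,
        ENNReal.toReal_ofReal (by positivity)]
      congr 2
      exact finrank_euclideanSpace_fin
    intro x hx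
    rw [uball, Set.indicator_of_mem hx, hvol]
    set a : ℝ := (Vball d)⁻¹ * Real.exp (3 * L * d / (2 * c))
      * (4 * Real.pi / (3 * d)) ^ ((d : ℝ) / 2) with ha
    have hapos : 0 < a := by rw [ha]; positivity
    have hstep := mul_le_mul_of_nonneg_left (hνlb x hx) hapos.le
    refine le_trans ?_ hstep
    have hRd : R ^ d = (3 * d / c) ^ ((d : ℝ) / 2) := by
      rw [hRdef, Real.sqrt_eq_rpow, ← Real.rpow_natCast ((3 * (d:ℝ) / c) ^ ((1:ℝ)/2)) d,
        ← Real.rpow_mul (by positivity)]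
      norm_num
      ring_nf
    have key : ((3 * d / c) ^ ((d : ℝ) / 2))⁻¹
        ≤ (4 * Real.pi / (3 * d)) ^ ((d : ℝ) / 2) * A⁻¹ := by
      have hmulbase : (4 * Real.pi / (3 * (d:ℝ))) ^ ((d : ℝ) / 2) * A⁻¹
          = ((2 * c) / (3 * d)) ^ ((d : ℝ) / 2) := by
        rw [hA, ← Real.inv_rpow (by positivity),
          ← Real.mul_rpow (by positivity) (by positivity)]
        congr 1
        rw [inv_div, div_mul_div_comm, div_eq_div_iff (by positivity) (by positivity)]
        ring
      have hLHS : ((3 * (d:ℝ) / c) ^ ((d : ℝ) / 2))⁻¹ = (c / (3 * d)) ^ ((d : ℝ) / 2) := by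
        rw [← Real.inv_rpow (by positivity), inv_div]
      rw [hmulbase, hLHS]
      apply Real.rpow_le_rpow (by positivity) ?_ (by positivity)
      rw [div_le_div_iff₀ (by positivity) (by positivity)]
      nlinarith [hd0, hc]
    calc (R ^ d * Vball d)⁻¹ = (Vball d)⁻¹ * ((3 * d / c) ^ ((d : ℝ) / 2))⁻¹ := by
          rw [mul_inv, hRd]; ring
      _ ≤ (Vball d)⁻¹ * ((4 * Real.pi / (3 * d)) ^ ((d : ℝ) / 2) * A⁻¹) :=
          mul_le_mul_of_nonneg_left key (by positivity)
      _ = a * (A⁻¹ * Real.exp (-(3 * L * d / (2 * c)))) := by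
          rw [ha, Real.exp_neg]
          field_simp

end
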